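/- Let G be a consistent perfect-information stochastic game with finitely many vertices and a tail winning condition W. For every initial vertex v_0, all strategies σ, τ, and any random variable N with values in ℕ ∪ {∞} that is a stopping time with respect to the filtration generated by (V_n)_{n∈ℕ} (in particular the deviation date reset_σ), one has E^{σ,τ}_{v_0}[val(V_N)·1_{N < ∞}] ≤ val(v_0). -/

import Mathlib

open MeasureTheory ProbabilityTheory Filter Topology

attribute [local instance] Classical.propDecidable

namespace StochasticGames

/-- A perfect-information stochastic game arena: a partition of the finite vertex set into
Max vertices, min vertices and random vertices, an edge relation such that every vertex has
an outgoing edge, and transition probabilities at random vertices, positive exactly on edges. -/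
structure Game (V : Type) [Fintype V] where
  VMax : Set V
  Vmin : Set V
  VR : Set V
  E : V → V → Prop
  p : V → V → ℝ
  cover : ∀ v, v ∈ VMax ∨ v ∈ Vmin ∨ v ∈ VR
  disjMm : Disjoint VMax Vmin
  disjMR : Disjoint VMax VR
  disjmR : Disjoint Vmin VR
  succ_exists : ∀ v, ∃ w, E v w
  p_nonneg : ∀ v ∈ VR, ∀ w, 0 ≤ p v w
  p_sum : ∀ v ∈ VR, ∑ w, p v w = 1
  p_pos_iff : ∀ v ∈ VR, ∀ w, (0 < p v w ↔ E v w)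

variable {V : Type} [Fintype V] [MeasurableSpace V] [DiscreteMeasurableSpace V]

/-- The cylinder of plays starting with the finite word `h`. -/
def cyl (h : List V) : Set (ℕ → V) :=
  {ω | ∀ i : Fin h.length, ω i = h.get i}

/-- Prepend a finite word to an infinite word. -/
def prepend (h : List V) (q : ℕ → V) : ℕ → V :=
  fun n => if hn : n < h.length then h.get ⟨n, hn⟩ else q (n - h.length)

/-- A winning condition is tail if it is invariant under adding/removing finite prefixes. -/
def IsTail (W : Set (ℕ → V)) : Prop :=
  ∀ (h : List V) (q : ℕ → V), q ∈ W ↔ prepend h q ∈ W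

/-- A finite play: a nonempty word whose consecutive vertices are linked by edges. -/
def Game.FinitePlay (G : Game V) (h : List V) : Prop :=
  h ≠ [] ∧ h.Chain' G.E

/-- A strategy for player Max: after any finite play ending in a Max vertex,
it chooses a successor along an edge. -/
def Game.IsMaxStrategy (G : Game V) (σ : List V → V) : Prop :=
  ∀ h : List V, G.FinitePlay h → ∀ v, h.getLast? = some v → v ∈ G.VMax → G.E v (σ h)

/-- A strategy for player min. -/
def Game.IsMinStrategy (G : Game V) (τ : List V → V) : Prop :=
  ∀ h : List V, G.FinitePlay h → ∀ v, h.getLast? = some v → v ∈ G.Vmin → G.E v (τ h)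

/-- `μ` is the probability measure on plays induced by the initial vertex `v` and the
strategies `σ` (for Max) and `τ` (for min): the play starts at `v` almost surely and,
conditionally on any finite prefix of positive probability, the next vertex is chosen by
`σ`, by `τ`, or according to `G.p`, depending on the owner of the current vertex. -/
def Game.IsInduced (G : Game V) (σ τ : List V → V) (v : V) (μ : Measure (ℕ → V)) : Prop :=
  IsProbabilityMeasure μ ∧
  μ {ω | ω 0 = v} = 1 ∧
  ∀ (h : List V) (u : V), h.getLast? = some u → μ (cyl h) ≠ 0 →
    (u ∈ G.VMax → ProbabilityTheory.cond μ (cyl h) {ω | ω h.length = σ h} = 1) ∧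
    (u ∈ G.Vmin → ProbabilityTheory.cond μ (cyl h) {ω | ω h.length = τ h} = 1) ∧
    (u ∈ G.VR → ∀ w, ProbabilityTheory.cond μ (cyl h) {ω | ω h.length = w} =
      ENNReal.ofReal (G.p u w))

/-- A family of measures indexed by a pair of strategies and an initial vertex. -/
abbrev StratFam (V : Type) [MeasurableSpace V] :=
  (List V → V) → (List V → V) → V → Measure (ℕ → V)

/-- `P` assigns to every pair of strategies and every initial vertex the induced
probability measure on plays. -/
def Game.IsInducedFam (G : Game V) (P : StratFam V) : Prop :=
  ∀ σ τ v, G.IsInduced σ τ v (P σ τ v)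

/-- The value of a vertex: `val(v) = sup_σ inf_τ P^{σ,τ}_v(W)`. -/
noncomputable def Game.val (G : Game V) (W : Set (ℕ → V)) (P : StratFam V) (v : V) : ℝ :=
  ⨆ σ : {σ // G.IsMaxStrategy σ}, ⨅ τ : {τ // G.IsMinStrategy τ}, (P σ.1 τ.1 v W).toReal

/-- An optimal strategy for Max: it guarantees winning with probability `val(v)` from
every vertex `v`. -/
def Game.OptimalMax (G : Game V) (W : Set (ℕ → V)) (P : StratFam V) (σ : List V → V) : Prop :=
  G.IsMaxStrategy σ ∧
  ∀ v, (⨅ τ : {τ // G.IsMinStrategy τ}, (P σ τ.1 v W).toReal) = G.val W P v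

/-- An optimal strategy for min. -/
def Game.OptimalMin (G : Game V) (W : Set (ℕ → V)) (P : StratFam V) (τ : List V → V) : Prop :=
  G.IsMinStrategy τ ∧
  ∀ v, (⨆ σ : {σ // G.IsMaxStrategy σ}, (P σ.1 τ v W).toReal) = G.val W P v

/-- An `ε`-optimal strategy for Max. -/
def Game.EpsOptimalMax (G : Game V) (W : Set (ℕ → V)) (P : StratFam V) (ε : ℝ)
    (σ : List V → V) : Prop :=
  G.IsMaxStrategy σ ∧
  ∀ v, G.val W P v - ε ≤ ⨅ τ : {τ // G.IsMinStrategy τ}, (P σ τ.1 v W).toReal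

/-- A game is consistent if no edge out of a Max or min vertex changes the value. -/
def Game.Consistent (G : Game V) (W : Set (ℕ → V)) (P : StratFam V) : Prop :=
  ∀ v w, G.E v w → (v ∈ G.VMax ∨ v ∈ G.Vmin) → G.val W P v = G.val W P w

/-- The quality of the strategy `σ` after a finite play `v₀ v₁ ⋯ vₙ`:
`inf_τ P^{σ,τ}_{v₀}(W ∣ V₀ = v₀, …, Vₙ = vₙ)`. -/
noncomputable def Game.qual (G : Game V) (W : Set (ℕ → V)) (P : StratFam V)
    (σ : List V → V) : List V → ℝ
  | [] => 0
  | v :: l => ⨅ τ : {τ // G.IsMinStrategy τ},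
      (ProbabilityTheory.cond (P σ τ.1 v) (cyl (v :: l)) W).toReal

/-- The finite play `ω 0, ω 1, …, ω n`. -/
def prefixList (ω : ℕ → V) (n : ℕ) : List V := List.ofFn (fun i : Fin (n + 1) => ω i)

/-- The deviation date: the first time the quality of `σ` drops at least `m/2` below the
value of the current vertex (`∞` if this never happens). -/
noncomputable def Game.resetTime (G : Game V) (W : Set (ℕ → V)) (P : StratFam V)
    (σ : List V → V) (m : ℝ) (ω : ℕ → V) : ℕ∞ :=
  sInf ((fun n : ℕ => (n : ℕ∞)) ''
    {n | G.qual W P σ (prefixList ω n) ≤ G.val W P (ω n) - m / 2})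

/-- The date `t(v₀,…,vₙ)` of the latest deviation before date `n`, along the play `ω`. -/
noncomputable def Game.lastDevAux (G : Game V) (W : Set (ℕ → V)) (P : StratFam V)
    (σ : List V → V) (m : ℝ) (ω : ℕ → V) : ℕ → ℕ
  | 0 => 0
  | n + 1 =>
    let t := G.lastDevAux W P σ m ω n
    if G.val W P (ω (n + 1)) - m / 2 ≤ G.qual W P σ ((prefixList ω (n + 1)).drop t)
    then t else n + 1

/-- The date of the latest deviation, as a function of the finite play `h`. -/
noncomputable def Game.lastDev [Inhabited V] (G : Game V) (W : Set (ℕ → V)) (P : StratFam V)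
    (σ : List V → V) (m : ℝ) (h : List V) : ℕ :=
  G.lastDevAux W P σ m (fun i => h.getD i default) (h.length - 1)

/-- The reset strategy `σ'`: forget everything before the latest deviation and apply `σ`. -/
noncomputable def Game.resetStrat [Inhabited V] (G : Game V) (W : Set (ℕ → V))
    (P : StratFam V) (σ : List V → V) (m : ℝ) : List V → V :=
  fun h => σ (h.drop (G.lastDev W P σ m h))

/-- The σ-algebra generated by the coordinates `V₀, …, Vₙ`. -/
def hist (V : Type) [MeasurableSpace V] (n : ℕ) : MeasurableSpace (ℕ → V) :=
  MeasurableSpace.comap (fun ω (i : Fin (n + 1)) => ω i) inferInstance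

/-- The strategy `σ[h]` shifted by the finite play `h`:
`σ[h](w₀w₁⋯wₖ) = σ(v₀⋯vₙw₁⋯wₖ)` where `h = v₀⋯vₙ`. -/
def shiftStrat (s : List V → V) (h : List V) : List V → V := fun l => s (h ++ l.drop 1)

/-- The function `φ[h]` shifted by the finite play `h`:
`φ[h](w₀w₁w₂⋯) = φ(v₀⋯vₙw₁w₂⋯)` where `h = v₀⋯vₙ`. -/
def shiftFun {α : Type} (φ : (ℕ → V) → α) (h : List V) : (ℕ → V) → α :=
  fun q => φ (prepend h (fun n => q (n + 1)))

/-- A superfluous edge: a move of Max decreasing the value, or a move of min increasing it. -/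
def Game.Superfluous (G : Game V) (W : Set (ℕ → V)) (P : StratFam V) (v w : V) : Prop :=
  (v ∈ G.VMax ∧ G.val W P w < G.val W P v) ∨ (v ∈ G.Vmin ∧ G.val W P v < G.val W P w)

/-! ### Auxiliary lemmas for the proof of `stopped_val_le` -/

set_option linter.unusedSectionVars false

section Aux

lemma cyl_nil : cyl ([] : List V) = Set.univ := by
  ext ω; simp [cyl]

lemma measurableSet_cyl (h : List V) : MeasurableSet (cyl h) := by
  have : cyl h = ⋂ i : Fin h.length, (fun ω : ℕ → V => ω i) ⁻¹' {h.get i} := by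
    ext ω; simp [cyl]
  rw [this]
  exact MeasurableSet.iInter fun i =>
    (measurable_pi_apply _) (measurableSet_singleton _)

lemma cyl_singleton (v : V) : cyl [v] = {ω : ℕ → V | ω 0 = v} := by
  ext ω
  constructor
  · intro hω; exact hω ⟨0, by simp⟩
  · intro hω i
    have : i = ⟨0, by simp⟩ := by
      apply Fin.ext; simpa using i.isLt
    rw [this]; exact hω

lemma cyl_concat (h : List V) (x : V) :
    cyl (h ++ [x]) = cyl h ∩ {ω : ℕ → V | ω h.length = x} := by
  ext ω
  constructor
  · intro hω
    refine ⟨fun i => ?_, ?_⟩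
    · have := hω ⟨i, by simp⟩
      simpa [List.getElem_append_left i.isLt] using this
    · have := hω ⟨h.length, by simp⟩
      simpa using this
  · rintro ⟨h1, h2⟩ i
    rcases lt_or_ge i.val h.length with hi | hi
    · have := h1 ⟨i, hi⟩
      simpa [List.getElem_append_left hi] using this
    · have : i.val = h.length := by have := i.isLt; simp at this; omega
      simp only [List.get_eq_getElem, this]
      simpa using h2

lemma head?_append_singleton (l : List V) (x : V) (hl : l ≠ []) :
    (l ++ [x]).head? = l.head? := by
  cases l with
  | nil => simp at hl
  | cons a t => rfl

end Aux

section Induced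

lemma measurableSet_coord (k : ℕ) (x : V) : MeasurableSet {ω : ℕ → V | ω k = x} := by
  have : {ω : ℕ → V | ω k = x} = (fun ω : ℕ → V => ω k) ⁻¹' {x} := rfl
  rw [this]
  exact (measurable_pi_apply k) (measurableSet_singleton x)

lemma meas_inter_of_cond {α : Type*} [MeasurableSpace α] {μ : Measure α} {s : Set α}
    (hs : MeasurableSet s) (hfin : μ s ≠ ⊤) (hpos : μ s ≠ 0)
    (t : Set α) : μ (s ∩ t) = μ s * (μ[|s] t) := by
  rw [cond_apply hs, ← mul_assoc, ENNReal.mul_inv_cancel hpos hfin, one_mul]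

variable {G : Game V} {σ τ : List V → V} {v : V} {μ : Measure (ℕ → V)}

lemma Game.IsInduced.cyl_concat_max (hμ : G.IsInduced σ τ v μ) {h : List V} {u : V}
    (hu : h.getLast? = some u) (hpos : μ (cyl h) ≠ 0) (huM : u ∈ G.VMax) (x : V) :
    μ (cyl (h ++ [x])) = if x = σ h then μ (cyl h) else 0 := by
  haveI := hμ.1
  have hfin : μ (cyl h) ≠ ⊤ := measure_ne_top μ _
  have hcond := (hμ.2.2 h u hu hpos).1 huM
  have hT : μ (cyl h ∩ {ω | ω h.length = σ h}) = μ (cyl h) := by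
    rw [meas_inter_of_cond (measurableSet_cyl h) hfin hpos, hcond, mul_one]
  by_cases hx : x = σ h
  · rw [cyl_concat, if_pos hx, hx, hT]
  · rw [if_neg hx]
    have hdiff : μ (cyl h ∩ {ω | ω h.length = σ h}) + μ (cyl h \ {ω | ω h.length = σ h})
        = μ (cyl h) := measure_inter_add_diff _ (measurableSet_coord _ _)
    rw [hT] at hdiff
    have h0 : μ (cyl h \ {ω | ω h.length = σ h}) = 0 := by
      exact (ENNReal.add_right_inj hfin).1 (by rw [add_zero]; exact hdiff)
    refine measure_mono_null ?_ h0
    rw [cyl_concat]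
    rintro ω ⟨hω1, hω2⟩
    exact ⟨hω1, fun hc => hx (hω2.symm.trans hc)⟩

lemma Game.IsInduced.cyl_concat_min (hμ : G.IsInduced σ τ v μ) {h : List V} {u : V}
    (hu : h.getLast? = some u) (hpos : μ (cyl h) ≠ 0) (huM : u ∈ G.Vmin) (x : V) :
    μ (cyl (h ++ [x])) = if x = τ h then μ (cyl h) else 0 := by
  haveI := hμ.1
  have hfin : μ (cyl h) ≠ ⊤ := measure_ne_top μ _
  have hcond := (hμ.2.2 h u hu hpos).2.1 huM
  have hT : μ (cyl h ∩ {ω | ω h.length = τ h}) = μ (cyl h) := by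
    rw [meas_inter_of_cond (measurableSet_cyl h) hfin hpos, hcond, mul_one]
  by_cases hx : x = τ h
  · rw [cyl_concat, if_pos hx, hx, hT]
  · rw [if_neg hx]
    have hdiff : μ (cyl h ∩ {ω | ω h.length = τ h}) + μ (cyl h \ {ω | ω h.length = τ h})
        = μ (cyl h) := measure_inter_add_diff _ (measurableSet_coord _ _)
    rw [hT] at hdiff
    have h0 : μ (cyl h \ {ω | ω h.length = τ h}) = 0 :=
      (ENNReal.add_right_inj hfin).1 (by rw [add_zero]; exact hdiff)
    refine measure_mono_null ?_ h0
    rw [cyl_concat]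
    rintro ω ⟨hω1, hω2⟩
    exact ⟨hω1, fun hc => hx (hω2.symm.trans hc)⟩

lemma Game.IsInduced.cyl_concat_rand (hμ : G.IsInduced σ τ v μ) {h : List V} {u : V}
    (hu : h.getLast? = some u) (hpos : μ (cyl h) ≠ 0) (huR : u ∈ G.VR) (x : V) :
    μ (cyl (h ++ [x])) = μ (cyl h) * ENNReal.ofReal (G.p u x) := by
  haveI := hμ.1
  have hfin : μ (cyl h) ≠ ⊤ := measure_ne_top μ _
  rw [cyl_concat, meas_inter_of_cond (measurableSet_cyl h) hfin hpos,
    (hμ.2.2 h u hu hpos).2.2 huR x]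

lemma Game.IsInduced.pos_cyl (hμ : G.IsInduced σ τ v μ) (hσ : G.IsMaxStrategy σ)
    (hτ : G.IsMinStrategy τ) :
    ∀ h : List V, μ (cyl h) ≠ 0 → h ≠ [] → h.head? = some v ∧ h.Chain' G.E := by
  haveI := hμ.1
  intro h
  induction h using List.reverseRecOn with
  | nil => exact fun _ hne => absurd rfl hne
  | append_singleton l x ih =>
    intro hpos _
    by_cases hl : l = []
    · subst hl
      have hx : x = v := by
        by_contra hxv
        apply hpos
        refine measure_mono_null ?_ ((prob_compl_eq_zero_iff
          (measurableSet_coord 0 v)).2 hμ.2.1)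
        simp only [List.nil_append, cyl_singleton]
        intro ω hω hω'
        exact hxv (hω.symm.trans hω')
      simp [hx, List.isChain_singleton]
      exact List.isChain_singleton v
    · have hposl : μ (cyl l) ≠ 0 := fun h0 => hpos (measure_mono_null
        (by rw [cyl_concat]; exact Set.inter_subset_left) h0)
      obtain ⟨hhead, hchain⟩ := ih hposl hl
      have hul : l.getLast? = some (l.getLast hl) := List.getLast?_eq_getLast hl
      set u := l.getLast hl with hu
      have hplay : G.FinitePlay l := ⟨hl, hchain⟩
      have hE : G.E u x := by
        rcases G.cover u with hM | hm | hR
        · have := hμ.cyl_concat_max hul hposl hM x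
          by_cases hx : x = σ l
          · rw [hx]; exact hσ l hplay u hul hM
          · rw [this, if_neg hx] at hpos; exact absurd rfl hpos
        · have := hμ.cyl_concat_min hul hposl hm x
          by_cases hx : x = τ l
          · rw [hx]; exact hτ l hplay u hul hm
          · rw [this, if_neg hx] at hpos; exact absurd rfl hpos
        · have := hμ.cyl_concat_rand hul hposl hR x
          rw [this] at hpos
          have hp : G.p u x ≠ 0 := by
            intro h0
            apply hpos
            rw [h0, ENNReal.ofReal_zero, mul_zero]
          exact (G.p_pos_iff u hR x).1 (lt_of_le_of_ne (G.p_nonneg u hR x) (Ne.symm hp))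
      constructor
      · rw [head?_append_singleton l x hl]; exact hhead
      · exact hchain.append (List.isChain_singleton x)
          (by intro a ha b hb
              simp only [List.head?_cons, Option.mem_def, Option.some.injEq] at hb
              rw [hul] at ha
              simp only [Option.mem_def, Option.some.injEq] at ha
              rw [← ha, ← hb]; exact hE)

end Induced

section Unique

variable {G : Game V} {μ μ' : Measure (ℕ → V)}

lemma Game.IsInduced.cyl_eq {σ τ σ' τ' : List V → V} {v : V}
    (hμ : G.IsInduced σ τ v μ) (hμ' : G.IsInduced σ' τ' v μ')
    (hagree : ∀ h u, h.getLast? = some u → μ (cyl h) ≠ 0 → μ' (cyl h) ≠ 0 →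
      (u ∈ G.VMax → σ h = σ' h) ∧ (u ∈ G.Vmin → τ h = τ' h)) :
    ∀ h : List V, μ (cyl h) = μ' (cyl h) := by
  haveI := hμ.1; haveI := hμ'.1
  intro h
  induction h using List.reverseRecOn with
  | nil => rw [cyl_nil]; simp
  | append_singleton l x ih =>
    by_cases hl : l = []
    · subst hl
      simp only [List.nil_append]
      by_cases hx : x = v
      · subst hx; rw [cyl_singleton, hμ.2.1, hμ'.2.1]
      · have key : ∀ (ν : Measure (ℕ → V)), IsProbabilityMeasure ν →
            ν {ω : ℕ → V | ω 0 = v} = 1 → ν (cyl [x]) = 0 := by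
          intro ν hprob hν
          refine measure_mono_null ?_
            ((prob_compl_eq_zero_iff (measurableSet_coord 0 v)).2 hν)
          rw [cyl_singleton]
          intro ω hω hω'
          exact hx (hω.symm.trans hω')
        rw [key μ hμ.1 hμ.2.1, key μ' hμ'.1 hμ'.2.1]
    · by_cases hpos : μ (cyl l) = 0
      · have hpos' : μ' (cyl l) = 0 := by rw [← ih]; exact hpos
        have sub : cyl (l ++ [x]) ⊆ cyl l := by
          rw [cyl_concat]; exact Set.inter_subset_left
        rw [measure_mono_null sub hpos, measure_mono_null sub hpos']
      · have hpos' : μ' (cyl l) ≠ 0 := by rw [← ih]; exact hpos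
        have hul : l.getLast? = some (l.getLast hl) := List.getLast?_eq_getLast hl
        set u := l.getLast hl
        obtain ⟨hagM, hagm⟩ := hagree l u hul hpos hpos'
        rcases G.cover u with hM | hm | hR
        · rw [hμ.cyl_concat_max hul hpos hM x, hμ'.cyl_concat_max hul hpos' hM x,
            ← hagM hM, ih]
        · rw [hμ.cyl_concat_min hul hpos hm x, hμ'.cyl_concat_min hul hpos' hm x,
            ← hagm hm, ih]
        · rw [hμ.cyl_concat_rand hul hpos hR x, hμ'.cyl_concat_rand hul hpos' hR x, ih]

lemma mem_cyl_ofFn {n : ℕ} (b : Fin n → V) (ω : ℕ → V) :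
    ω ∈ cyl (List.ofFn b) ↔ ∀ i : Fin n, ω i = b i := by
  constructor
  · intro hω i
    have := hω (Fin.cast (List.length_ofFn (f := b)).symm i)
    simpa [List.get_ofFn] using this
  · intro hω i
    have hi : (i : ℕ) < n := by simpa [List.length_ofFn] using i.isLt
    have := hω ⟨i, hi⟩
    simp only [List.get_eq_getElem, List.getElem_ofFn]
    exact this

lemma pi_eq_generateFrom_cyl :
    (inferInstance : MeasurableSpace (ℕ → V)) =
      MeasurableSpace.generateFrom {s : Set (ℕ → V) | ∃ h : List V, s = cyl h} := by
  apply le_antisymm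
  · have hcoord : ∀ (n : ℕ) (x : V), MeasurableSet[MeasurableSpace.generateFrom
        {s : Set (ℕ → V) | ∃ h : List V, s = cyl h}] {ω : ℕ → V | ω n = x} := by
      intro n x
      have : {ω : ℕ → V | ω n = x} = ⋃ b : Fin n → V, cyl (List.ofFn b ++ [x]) := by
        ext ω
        simp only [Set.mem_setOf_eq, Set.mem_iUnion]
        constructor
        · intro hω
          refine ⟨fun i => ω i, ?_⟩
          rw [cyl_concat]
          refine ⟨(mem_cyl_ofFn _ ω).2 fun i => rfl, ?_⟩
          simpa [List.length_ofFn] using hω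
        · rintro ⟨b, hb⟩
          rw [cyl_concat] at hb
          have := hb.2
          simpa [List.length_ofFn] using this
      rw [this]
      exact MeasurableSet.iUnion fun b =>
        MeasurableSpace.measurableSet_generateFrom ⟨List.ofFn b ++ [x], rfl⟩
    show MeasurableSpace.pi ≤ _
    refine iSup_le fun n => ?_
    rw [MeasurableSpace.comap_le_iff_le_map]
    intro s _
    show MeasurableSet[MeasurableSpace.generateFrom
      {s : Set (ℕ → V) | ∃ h : List V, s = cyl h}] ((fun ω : ℕ → V => ω n) ⁻¹' s)
    have heq : (fun ω : ℕ → V => ω n) ⁻¹' s = ⋃ x ∈ s, {ω : ℕ → V | ω n = x} := by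
      ext ω; simp
    rw [heq]
    exact MeasurableSet.biUnion (Set.to_countable s) fun x _ => hcoord n x
  · exact MeasurableSpace.generateFrom_le (by rintro s ⟨h, rfl⟩; exact measurableSet_cyl h)

lemma isPiSystem_cyl : IsPiSystem {s : Set (ℕ → V) | ∃ h : List V, s = cyl h} := by
  have key : ∀ (h1 h2 : List V), h1.length ≤ h2.length →
      (cyl h1 ∩ cyl h2 : Set (ℕ → V)).Nonempty → cyl h2 ⊆ cyl h1 := by
    intro h1 h2 hle ⟨ω₀, hω1, hω2⟩ ω hω i
    have hi2 : (i : ℕ) < h2.length := lt_of_lt_of_le i.isLt hle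
    calc ω i = h2.get ⟨i, hi2⟩ := hω ⟨i, hi2⟩
    _ = ω₀ i := (hω2 ⟨i, hi2⟩).symm
    _ = h1.get i := hω1 i
  rintro s ⟨h1, rfl⟩ t ⟨h2, rfl⟩ hne
  rcases le_total h1.length h2.length with hle | hle
  · exact ⟨h2, (Set.inter_eq_self_of_subset_right (key h1 h2 hle hne)).symm ▸ rfl⟩
  · refine ⟨h1, ?_⟩
    rw [Set.inter_comm] at hne ⊢
    exact (Set.inter_eq_self_of_subset_right (key h2 h1 hle hne))

lemma meas_eq_of_cyl_eq (hμ : IsProbabilityMeasure μ) (hμ' : IsProbabilityMeasure μ')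
    (hc : ∀ h : List V, μ (cyl h) = μ' (cyl h)) : μ = μ' :=
  ext_of_generate_finite _ pi_eq_generateFrom_cyl isPiSystem_cyl
    (by rintro s ⟨h, rfl⟩; exact hc h) (by simp)

end Unique

section Shift

/-- Dropping the first vertex of a play. -/
def shiftOne (ω : ℕ → V) : ℕ → V := fun n => ω (n + 1)

lemma measurable_shiftOne : Measurable (shiftOne : (ℕ → V) → (ℕ → V)) :=
  measurable_pi_iff.2 fun n => measurable_pi_apply (n + 1)

lemma mem_cyl_cons (ω : ℕ → V) (u : V) (l : List V) :
    ω ∈ cyl (u :: l) ↔ ω 0 = u ∧ ∀ i : Fin l.length, ω (i + 1) = l.get i := by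
  constructor
  · intro hω
    refine ⟨hω ⟨0, by simp⟩, fun i => ?_⟩
    have := hω ⟨i + 1, by simp⟩
    simpa using this
  · rintro ⟨h0, hs⟩ i
    rcases i with ⟨iv, hiv⟩
    cases iv with
    | zero => simpa using h0
    | succ j =>
      have hj : j < l.length := by simpa using hiv
      have := hs ⟨j, hj⟩
      simpa using this

lemma mem_cyl_pair (ω : ℕ → V) (u w : V) :
    ω ∈ cyl [u, w] ↔ ω 0 = u ∧ ω 1 = w := by
  rw [mem_cyl_cons]
  constructor
  · rintro ⟨h0, hs⟩
    exact ⟨h0, by simpa using hs ⟨0, by simp⟩⟩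
  · rintro ⟨h0, h1⟩
    refine ⟨h0, fun i => ?_⟩
    have : i = ⟨0, by simp⟩ := by apply Fin.ext; simpa using i.isLt
    rw [this]; simpa using h1

lemma shift_mem_cyl (ω : ℕ → V) (l : List V) :
    shiftOne ω ∈ cyl l ↔ ∀ i : Fin l.length, ω (i + 1) = l.get i := Iff.rfl

lemma pair_inter_shift_cyl (u w : V) (l : List V) (hl : l.head? = some w) :
    cyl [u, w] ∩ shiftOne ⁻¹' (cyl l) = cyl (u :: l) := by
  cases l with
  | nil => simp at hl
  | cons z rest =>
    have hz : z = w := by simpa using hl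
    subst hz
    ext ω
    simp only [Set.mem_inter_iff, Set.mem_preimage, mem_cyl_pair, shift_mem_cyl,
      mem_cyl_cons]
    constructor
    · rintro ⟨⟨h0, _⟩, hsh⟩
      exact ⟨h0, hsh⟩
    · rintro ⟨h0, hsh⟩
      refine ⟨⟨h0, ?_⟩, hsh⟩
      have := hsh ⟨0, by simp⟩
      simpa using this

lemma pair_inter_shift_cyl_empty (u w z : V) (rest : List V) (hzw : z ≠ w) :
    cyl [u, w] ∩ shiftOne ⁻¹' (cyl (z :: rest)) = ∅ := by
  ext ω
  simp only [Set.mem_inter_iff, Set.mem_preimage, mem_cyl_pair, shift_mem_cyl,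
    Set.mem_empty_iff_false, iff_false, not_and]
  rintro ⟨h0, h1⟩ hsh
  have := hsh ⟨0, by simp⟩
  simp at this
  exact hzw (this.symm.trans h1)

lemma Game.IsInduced.shift {G : Game V} {σ τ : List V → V} {u : V} {μ : Measure (ℕ → V)}
    (hμ : G.IsInduced σ τ u μ) {w : V} (hpos : μ (cyl [u, w]) ≠ 0) :
    G.IsInduced (fun l => σ (u :: l)) (fun l => τ (u :: l)) w
      (Measure.map shiftOne (μ[|cyl [u, w]])) := by
  haveI := hμ.1
  set s : Set (ℕ → V) := cyl [u, w] with hs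
  have hsm : MeasurableSet s := measurableSet_cyl _
  have hfin : μ s ≠ ⊤ := measure_ne_top μ s
  haveI hcondprob : IsProbabilityMeasure (μ[|s]) := cond_isProbabilityMeasure hpos
  have hmap : ∀ A : Set (ℕ → V), MeasurableSet A →
      (Measure.map shiftOne (μ[|s])) A = (μ s)⁻¹ * μ (s ∩ shiftOne ⁻¹' A) := by
    intro A hA
    rw [Measure.map_apply measurable_shiftOne hA, cond_apply hsm]
  refine ⟨Measure.isProbabilityMeasure_map measurable_shiftOne.aemeasurable, ?_, ?_⟩
  · have h1 : s ∩ shiftOne ⁻¹' {ω : ℕ → V | ω 0 = w} = s := by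
      ext ω
      simp only [Set.mem_inter_iff, Set.mem_preimage, Set.mem_setOf_eq, hs,
        mem_cyl_pair, shiftOne]
      tauto
    rw [hmap _ (measurableSet_coord 0 w), h1, ENNReal.inv_mul_cancel hpos hfin]
  · intro l y hly hl0
    have hlne : l ≠ [] := by rintro rfl; simp at hly
    obtain ⟨z, rest, rfl⟩ : ∃ z rest, l = z :: rest := by
      cases l with
      | nil => exact absurd rfl hlne
      | cons z rest => exact ⟨z, rest, rfl⟩
    have hz : w = z := by
      by_contra hzw
      apply hl0
      rw [hmap _ (measurableSet_cyl _),
        pair_inter_shift_cyl_empty u w z rest (fun h => hzw h.symm)]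
      simp
    subst hz
    have hhead : (w :: rest).head? = some w := rfl
    have hinter := pair_inter_shift_cyl u w (w :: rest) hhead
    have hmcyl : (Measure.map shiftOne (μ[|s])) (cyl (w :: rest))
        = (μ s)⁻¹ * μ (cyl (u :: w :: rest)) := by
      rw [hmap _ (measurableSet_cyl _), hinter]
    have hbpos : μ (cyl (u :: w :: rest)) ≠ 0 := by
      intro h0; apply hl0; rw [hmcyl, h0, mul_zero]
    have hbfin : μ (cyl (u :: w :: rest)) ≠ ⊤ := measure_ne_top μ _
    have hlast : (u :: w :: rest).getLast? = some y := by
      rw [List.getLast?_cons_cons]; exact hly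
    have hcond := hμ.2.2 (u :: w :: rest) y hlast hbpos
    have key : ∀ x : V,
        ProbabilityTheory.cond (Measure.map shiftOne (μ[|s])) (cyl (w :: rest))
            {ω | ω (w :: rest).length = x}
          = ProbabilityTheory.cond μ (cyl (u :: w :: rest))
            {ω | ω (u :: w :: rest).length = x} := by
      intro x
      have hTm : MeasurableSet {ω : ℕ → V | ω (w :: rest).length = x} :=
        measurableSet_coord _ _
      have hiT : s ∩ shiftOne ⁻¹' (cyl (w :: rest) ∩ {ω | ω (w :: rest).length = x})
          = cyl (u :: w :: rest) ∩ {ω | ω (u :: w :: rest).length = x} := by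
        rw [Set.preimage_inter, ← Set.inter_assoc, hinter]
        rfl
      rw [cond_apply (measurableSet_cyl _), cond_apply (measurableSet_cyl _),
        hmap _ ((measurableSet_cyl _).inter hTm), hiT, hmcyl,
        ENNReal.mul_inv (Or.inl (ENNReal.inv_ne_zero.2 hfin)) (Or.inr hbpos), inv_inv]
      calc μ s * (μ (cyl (u :: w :: rest)))⁻¹ *
            ((μ s)⁻¹ * μ (cyl (u :: w :: rest) ∩ {ω | ω (u :: w :: rest).length = x}))
          = (μ (cyl (u :: w :: rest)))⁻¹ *
              μ (cyl (u :: w :: rest) ∩ {ω | ω (u :: w :: rest).length = x}) *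
              (μ s * (μ s)⁻¹) := by ring
        _ = (μ (cyl (u :: w :: rest)))⁻¹ *
              μ (cyl (u :: w :: rest) ∩ {ω | ω (u :: w :: rest).length = x}) := by
            rw [ENNReal.mul_inv_cancel hpos hfin, mul_one]
    refine ⟨fun hyM => ?_, fun hym => ?_, fun hyR x => ?_⟩
    · rw [key (σ (u :: w :: rest))]
      exact hcond.1 hyM
    · rw [key (τ (u :: w :: rest))]
      exact hcond.2.1 hym
    · rw [key x]
      exact hcond.2.2 hyR x

end Shift

section Strategies

variable (G : Game V)

/-- A default successor. -/
noncomputable def Game.dflt (v : V) : V := (G.succ_exists v).choose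

lemma Game.dflt_edge (v : V) : G.E v (G.dflt v) := (G.succ_exists v).choose_spec

/-- The default (positional) strategy. -/
noncomputable def Game.dstrat [Nonempty V] : List V → V := fun h =>
  match h.getLast? with
  | some v => G.dflt v
  | none => Classical.arbitrary V

lemma Game.dstrat_edge [Nonempty V] (h : List V) (v : V) (hv : h.getLast? = some v) :
    G.E v (G.dstrat h) := by
  have : G.dstrat h = G.dflt v := by
    simp [Game.dstrat, hv]
  rw [this]
  exact G.dflt_edge v

lemma Game.dstrat_isMax [Nonempty V] : G.IsMaxStrategy G.dstrat :=
  fun h _ v hv _ => G.dstrat_edge h v hv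

lemma Game.dstrat_isMin [Nonempty V] : G.IsMinStrategy G.dstrat :=
  fun h _ v hv _ => G.dstrat_edge h v hv

lemma nonempty_maxStrategy [Nonempty V] : Nonempty {σ // G.IsMaxStrategy σ} :=
  ⟨⟨G.dstrat, G.dstrat_isMax⟩⟩

lemma nonempty_minStrategy [Nonempty V] : Nonempty {τ // G.IsMinStrategy τ} :=
  ⟨⟨G.dstrat, G.dstrat_isMin⟩⟩

variable {G} {W : Set (ℕ → V)} {P : StratFam V}

lemma bddBelow_minRange (σ' : List V → V) (v : V) :
    BddBelow (Set.range fun τ : {τ // G.IsMinStrategy τ} => (P σ' τ.1 v W).toReal) :=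
  ⟨0, by rintro r ⟨t, rfl⟩; exact ENNReal.toReal_nonneg⟩

lemma toReal_prob_le_one {μ : Measure (ℕ → V)} (hμ : IsProbabilityMeasure μ)
    (A : Set (ℕ → V)) : (μ A).toReal ≤ 1 := by
  have h1 : μ A ≤ 1 := prob_le_one
  calc (μ A).toReal ≤ (1 : ENNReal).toReal := ENNReal.toReal_mono ENNReal.one_ne_top h1
    _ = 1 := by simp

lemma Game.val_nonneg (v : V) : 0 ≤ G.val W P v := by
  apply Real.iSup_nonneg
  intro σ'
  exact Real.iInf_nonneg fun τ' => ENNReal.toReal_nonneg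

lemma iInf_min_le_one [Nonempty V] (hP : G.IsInducedFam P) (σ' : List V → V) (v : V) :
    (⨅ τ : {τ // G.IsMinStrategy τ}, (P σ' τ.1 v W).toReal) ≤ 1 := by
  haveI := nonempty_minStrategy G
  refine ciInf_le_of_le (bddBelow_minRange σ' v) (Classical.arbitrary _) ?_
  exact toReal_prob_le_one (hP σ' _ v).1 W

lemma Game.val_le_one [Nonempty V] (hP : G.IsInducedFam P) (v : V) : G.val W P v ≤ 1 :=
  Real.iSup_le (fun σ' => iInf_min_le_one hP σ'.1 v) zero_le_one

lemma bddAbove_maxRange [Nonempty V] (hP : G.IsInducedFam P) (v : V) :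
    BddAbove (Set.range fun σ' : {σ // G.IsMaxStrategy σ} =>
      ⨅ τ : {τ // G.IsMinStrategy τ}, (P σ'.1 τ.1 v W).toReal) :=
  ⟨1, by rintro r ⟨s, rfl⟩; exact iInf_min_le_one hP s.1 v⟩

end Strategies

section VRStep

variable {G : Game V} {W : Set (ℕ → V)} {P : StratFam V}

lemma ofReal_sum_le_sum_ofReal {α : Type*} (s : Finset α) (f : α → ℝ) :
    ENNReal.ofReal (∑ i ∈ s, f i) ≤ ∑ i ∈ s, ENNReal.ofReal (f i) := by
  have h1 : ∑ i ∈ s, f i ≤ ∑ i ∈ s, max (f i) 0 :=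
    Finset.sum_le_sum fun i _ => le_max_left _ _
  calc ENNReal.ofReal (∑ i ∈ s, f i) ≤ ENNReal.ofReal (∑ i ∈ s, max (f i) 0) :=
        ENNReal.ofReal_le_ofReal h1
    _ = ∑ i ∈ s, ENNReal.ofReal (max (f i) 0) :=
        ENNReal.ofReal_sum_of_nonneg fun i _ => le_max_right _ _
    _ = ∑ i ∈ s, ENNReal.ofReal (f i) := by
        refine Finset.sum_congr rfl fun i _ => ?_
        rcases le_total (f i) 0 with hf | hf
        · rw [max_eq_right hf, ENNReal.ofReal_zero, ENNReal.ofReal_eq_zero.2 hf]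
        · rw [max_eq_left hf]

lemma Game.vr_step [Nonempty V] (hW : MeasurableSet W) (hTail : IsTail W)
    (hP : G.IsInducedFam P) {u : V} (hu : u ∈ G.VR) :
    ∑ x : V, G.p u x * G.val W P x ≤ G.val W P u := by
  haveI := nonempty_minStrategy G
  haveI := nonempty_maxStrategy G
  refine le_of_forall_pos_le_add fun ε hε => ?_
  -- choose ε-optimal strategies at each vertex
  have hchoice : ∀ x : V, ∃ σx : {σ // G.IsMaxStrategy σ},
      G.val W P x - ε < ⨅ τ : {τ // G.IsMinStrategy τ}, (P σx.1 τ.1 x W).toReal := by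
    intro x
    have hlt : G.val W P x - ε < G.val W P x := by linarith
    exact exists_lt_of_lt_ciSup hlt
  choose σfam hσfam using hchoice
  -- the combined strategy
  set σstar : List V → V := fun l =>
    match l with
    | _ :: x :: rest => (σfam x).1 (x :: rest)
    | _ => G.dstrat l
    with hσstar
  have hσstarMax : G.IsMaxStrategy σstar := by
    rintro h hplay y hy hyM
    match h with
    | [] => exact absurd rfl hplay.1
    | [a] =>
      show G.E y (G.dstrat [a])
      exact G.dstrat_edge [a] y hy
    | a :: x :: rest =>
      show G.E y ((σfam x).1 (x :: rest))
      have hlast : (x :: rest).getLast? = some y := by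
        rw [List.getLast?_cons_cons] at hy; exact hy
      exact (σfam x).2 (x :: rest) ⟨List.cons_ne_nil _ _, hplay.2.tail⟩ y hlast hyM
  -- the main estimate against any min strategy
  have hmain : ∀ τ' : {τ // G.IsMinStrategy τ},
      (∑ x : V, G.p u x * G.val W P x) - ε ≤ (P σstar τ'.1 u W).toReal := by
    intro τ'
    set μ := P σstar τ'.1 u with hμdef
    have hμ := hP σstar τ'.1 u
    haveI := hμ.1
    have hcyl_u : μ (cyl [u]) = 1 := by rw [cyl_singleton]; exact hμ.2.1
    have h_u_pos : μ (cyl [u]) ≠ 0 := by rw [hcyl_u]; exact one_ne_zero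
    have hlast_u : ([u] : List V).getLast? = some u := rfl
    have hpair : ∀ x, μ (cyl [u, x]) = ENNReal.ofReal (G.p u x) := by
      intro x
      have := hμ.cyl_concat_rand hlast_u h_u_pos hu x
      rw [← hμdef] at this; simpa [hcyl_u] using this
    -- per-vertex bound
    have hx_bound : ∀ x : V,
        ENNReal.ofReal (G.p u x) * ENNReal.ofReal (G.val W P x - ε)
          ≤ μ (W ∩ cyl [u, x]) := by
      intro x
      rcases eq_or_lt_of_le (G.p_nonneg u hu x) with hp0 | hppos
      · rw [← hp0]; simp
      · have hpairpos : μ (cyl [u, x]) ≠ 0 := by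
          rw [hpair x]
          simp only [ne_eq, ENNReal.ofReal_eq_zero, not_le]
          exact hppos
        have hEux : G.E u x := (G.p_pos_iff u hu x).1 hppos
        have hshift := hμ.shift hpairpos
        set ν := Measure.map shiftOne (μ[|cyl [u, x]]) with hνdef
        -- repaired min strategy
        set τ'' : List V → V := fun l =>
          if (u :: l).Chain' G.E then τ'.1 (u :: l) else G.dstrat l with hτ''def
        have hτ''min : G.IsMinStrategy τ'' := by
          intro h hplay y hy hym
          by_cases hch : (u :: h).Chain' G.E
          · have : τ'' h = τ'.1 (u :: h) := by simp only [hτ''def, if_pos hch]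
            rw [this]
            have hylast : (u :: h).getLast? = some y := by
              obtain ⟨z, rest, rfl⟩ : ∃ z rest, h = z :: rest := by
                cases h with
                | nil => exact absurd rfl hplay.1
                | cons z rest => exact ⟨z, rest, rfl⟩
              rw [List.getLast?_cons_cons]; exact hy
            exact τ'.2 (u :: h) ⟨List.cons_ne_nil _ _, hch⟩ y hylast hym
          · have : τ'' h = G.dstrat h := by simp only [hτ''def, if_neg hch]
            rw [this]
            exact G.dstrat_edge h y hy
        have hμ2 := hP (σfam x).1 τ'' x
        haveI := hμ2.1
        -- agreement of strategies on positive cylinders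
        have hagree : ∀ h y, h.getLast? = some y → ν (cyl h) ≠ 0 →
            (P (σfam x).1 τ'' x) (cyl h) ≠ 0 →
            (y ∈ G.VMax → (fun l => σstar (u :: l)) h = (σfam x).1 h) ∧
            (y ∈ G.Vmin → (fun l => τ'.1 (u :: l)) h = τ'' h) := by
          intro h y hy hν0 hP0
          have hne : h ≠ [] := by rintro rfl; simp at hy
          obtain ⟨hhead, hchain⟩ := hμ2.pos_cyl (σfam x).2 hτ''min h hP0 hne
          obtain ⟨z, rest, rfl⟩ : ∃ z rest, h = z :: rest := by
            cases h with
            | nil => exact absurd rfl hne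
            | cons z rest => exact ⟨z, rest, rfl⟩
          have hz : x = z := by
            have : z = x := by simpa using hhead
            exact this.symm
          subst hz
          constructor
          · intro _; rfl
          · intro _
            have hch : (u :: x :: rest).Chain' G.E := by
              show List.IsChain G.E (u :: x :: rest)
              rw [List.isChain_cons_cons]
              exact ⟨hEux, hchain⟩
            simp only [hτ''def, if_pos hch]
        have hcylν : ∀ h, ν (cyl h) = (P (σfam x).1 τ'' x) (cyl h) :=
          hshift.cyl_eq hμ2 hagree
        have hνW : ν W = (P (σfam x).1 τ'' x) W := by
          rw [meas_eq_of_cyl_eq hshift.1 hμ2.1 hcylν]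
        -- lower bound on the shifted measure of W
        have hge : G.val W P x - ε ≤ ((P (σfam x).1 τ'' x) W).toReal := by
          refine le_trans (le_of_lt (hσfam x)) ?_
          exact ciInf_le (bddBelow_minRange _ _) ⟨τ'', hτ''min⟩
        have hνWge : ENNReal.ofReal (G.val W P x - ε) ≤ ν W := by
          rw [hνW]
          calc ENNReal.ofReal (G.val W P x - ε)
              ≤ ENNReal.ofReal (((P (σfam x).1 τ'' x) W).toReal) :=
                ENNReal.ofReal_le_ofReal hge
            _ = (P (σfam x).1 τ'' x) W := ENNReal.ofReal_toReal (measure_ne_top _ _)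
        -- the tail property identifies the conditional measure of W
        have htail : μ (W ∩ cyl [u, x]) = μ (cyl [u, x]) * ν W := by
          have hν_eval : ν W = (μ (cyl [u, x]))⁻¹ * μ (cyl [u, x] ∩ shiftOne ⁻¹' W) := by
            rw [hνdef, Measure.map_apply measurable_shiftOne hW,
              cond_apply (measurableSet_cyl _)]
          have hWsh : cyl [u, x] ∩ shiftOne ⁻¹' W = cyl [u, x] ∩ W := by
            ext ω
            simp only [Set.mem_inter_iff, Set.mem_preimage, mem_cyl_pair]
            constructor
            · rintro ⟨⟨h0, h1⟩, hsh⟩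
              refine ⟨⟨h0, h1⟩, ?_⟩
              have hpre : prepend [u] (shiftOne ω) = ω := by
                funext n
                cases n with
                | zero => simp [prepend, h0]
                | succ m => simp [prepend, shiftOne]
              have := (hTail [u] (shiftOne ω)).1 hsh
              rwa [hpre] at this
            · rintro ⟨⟨h0, h1⟩, hw⟩
              refine ⟨⟨h0, h1⟩, ?_⟩
              have hpre : prepend [u] (shiftOne ω) = ω := by
                funext n
                cases n with
                | zero => simp [prepend, h0]
                | succ m => simp [prepend, shiftOne]
              apply (hTail [u] (shiftOne ω)).2
              rwa [hpre]
          rw [hν_eval, hWsh, ← mul_assoc,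
            ENNReal.mul_inv_cancel hpairpos (measure_ne_top μ _), one_mul,
            Set.inter_comm]
        calc ENNReal.ofReal (G.p u x) * ENNReal.ofReal (G.val W P x - ε)
            ≤ ENNReal.ofReal (G.p u x) * ν W := mul_le_mul_right hνWge _
          _ = μ (cyl [u, x]) * ν W := by rw [hpair]
          _ = μ (W ∩ cyl [u, x]) := htail.symm
    -- sum the bounds
    have hdisj : Pairwise (Function.onFun Disjoint fun x : V => W ∩ cyl [u, x]) := by
      intro x y hxy
      simp only [Function.onFun, Set.disjoint_left]
      rintro ω ⟨_, hωx⟩ ⟨_, hωy⟩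
      rw [mem_cyl_pair] at hωx hωy
      exact hxy (hωx.2.symm.trans hωy.2)
    have hsum_le : ∑ x : V, μ (W ∩ cyl [u, x]) ≤ μ W := by
      calc ∑ x : V, μ (W ∩ cyl [u, x]) = ∑' x : V, μ (W ∩ cyl [u, x]) :=
            (tsum_fintype _).symm
        _ = μ (⋃ x : V, W ∩ cyl [u, x]) :=
            (measure_iUnion hdisj fun x => hW.inter (measurableSet_cyl _)).symm
        _ ≤ μ W := measure_mono (Set.iUnion_subset fun x => Set.inter_subset_left)
    have hWtot : ENNReal.ofReal (∑ x : V, G.p u x * (G.val W P x - ε)) ≤ μ W := by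
      calc ENNReal.ofReal (∑ x : V, G.p u x * (G.val W P x - ε))
          ≤ ∑ x : V, ENNReal.ofReal (G.p u x * (G.val W P x - ε)) := by
            apply ofReal_sum_le_sum_ofReal
        _ = ∑ x : V, ENNReal.ofReal (G.p u x) * ENNReal.ofReal (G.val W P x - ε) := by
            refine Finset.sum_congr rfl fun x _ => ?_
            exact ENNReal.ofReal_mul (G.p_nonneg u hu x)
        _ ≤ ∑ x : V, μ (W ∩ cyl [u, x]) := Finset.sum_le_sum fun x _ => hx_bound x
        _ ≤ μ W := hsum_le
    have hsub : (∑ x : V, G.p u x * G.val W P x) - ε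
        = ∑ x : V, G.p u x * (G.val W P x - ε) := by
      simp only [mul_sub]
      rw [Finset.sum_sub_distrib, ← Finset.sum_mul, G.p_sum u hu, one_mul]
    rcases le_or_gt (∑ x : V, G.p u x * (G.val W P x - ε)) 0 with hc | hc
    · rw [hsub]
      exact le_trans hc ENNReal.toReal_nonneg
    · have := ENNReal.toReal_mono (measure_ne_top μ W) hWtot
      rw [ENNReal.toReal_ofReal hc.le] at this
      rw [hsub]
      exact this
  -- conclude
  have h1 : (∑ x : V, G.p u x * G.val W P x) - ε
      ≤ ⨅ τ : {τ // G.IsMinStrategy τ}, (P σstar τ.1 u W).toReal := le_ciInf hmain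
  have hub : (⨅ τ : {τ // G.IsMinStrategy τ}, (P σstar τ.1 u W).toReal)
      ≤ G.val W P u :=
    le_ciSup (bddAbove_maxRange hP u) ⟨σstar, hσstarMax⟩
  linarith

end VRStep

section Stopping

variable {N : (ℕ → V) → ℕ∞}

lemma N_le_agree (hN : ∀ n : ℕ, MeasurableSet[hist V n] {ω | N ω ≤ (n : ℕ∞)})
    {k : ℕ} {ω ω' : ℕ → V} (hag : ∀ i, i ≤ k → ω i = ω' i) :
    N ω ≤ (k : ℕ∞) ↔ N ω' ≤ (k : ℕ∞) := by
  obtain ⟨t, _, hpre⟩ := MeasurableSpace.measurableSet_comap.1 (hN k)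
  have hfun : (fun i : Fin (k+1) => ω i) = fun i : Fin (k+1) => ω' i := by
    funext i
    exact hag i (Nat.lt_succ_iff.1 i.isLt)
  constructor
  · intro hle
    have h1 : ω ∈ (fun (ω : ℕ → V) (i : Fin (k+1)) => ω i) ⁻¹' t := by
      rw [hpre]; exact hle
    have h2 : ω' ∈ (fun (ω : ℕ → V) (i : Fin (k+1)) => ω i) ⁻¹' t := by
      show (fun i : Fin (k+1) => ω' i) ∈ t
      rw [← hfun]; exact h1
    rw [hpre] at h2; exact h2
  · intro hle
    have h1 : ω' ∈ (fun (ω : ℕ → V) (i : Fin (k+1)) => ω i) ⁻¹' t := by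
      rw [hpre]; exact hle
    have h2 : ω ∈ (fun (ω : ℕ → V) (i : Fin (k+1)) => ω i) ⁻¹' t := by
      show (fun i : Fin (k+1) => ω i) ∈ t
      rw [hfun]; exact h1
    rw [hpre] at h2; exact h2

lemma N_eq_agree (hN : ∀ n : ℕ, MeasurableSet[hist V n] {ω | N ω ≤ (n : ℕ∞)})
    {n : ℕ} {ω ω' : ℕ → V} (hag : ∀ i, i ≤ n → ω i = ω' i)
    (hle : N ω ≤ (n : ℕ∞)) : N ω = N ω' := by
  have hle' : N ω' ≤ (n : ℕ∞) := (N_le_agree hN hag).1 hle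
  have key : ∀ (a b : ℕ → V), (∀ i, i ≤ n → a i = b i) → N a ≤ (n : ℕ∞) → N b ≤ N a := by
    intro a b hab ha
    have hne : N a ≠ ⊤ := ne_top_of_le_ne_top (ENat.coe_ne_top n) ha
    have hcoe : (((N a).toNat : ℕ) : ℕ∞) = N a := ENat.coe_toNat hne
    have hkn : (N a).toNat ≤ n := by
      have : (((N a).toNat : ℕ) : ℕ∞) ≤ (n : ℕ∞) := hcoe.le.trans ha
      exact_mod_cast this
    have := (N_le_agree hN fun i hi => hab i (hi.trans hkn)).1 hcoe.ge
    rwa [hcoe] at this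
  exact le_antisymm (key ω' ω (fun i hi => (hag i hi).symm) hle') (key ω ω' hag hle)

end Stopping

/-- optional stopping bound: in a consistent game, for any stopping time `N`,
`E[val(V_N)·1_{N<∞}] ≤ val(v₀)`. -/
theorem stopped_val_le
    (G : Game V) (W : Set (ℕ → V)) (hW : MeasurableSet W) (hTail : IsTail W)
    (P : StratFam V) (hP : G.IsInducedFam P) (hCons : G.Consistent W P)
    (σ τ : List V → V) (hσ : G.IsMaxStrategy σ) (hτ : G.IsMinStrategy τ) (v₀ : V)
    (N : (ℕ → V) → ℕ∞) (hN : ∀ n : ℕ, MeasurableSet[hist V n] {ω | N ω ≤ (n : ℕ∞)}) :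
    ∫ ω, (if N ω < ⊤ then G.val W P (ω ((N ω).toNat)) else 0) ∂(P σ τ v₀)
      ≤ G.val W P v₀ := by
  haveI : Nonempty V := ⟨v₀⟩
  set μ := P σ τ v₀ with hμdef
  have hμ := hP σ τ v₀
  haveI := hμ.1
  set phi : ℕ → (ℕ → V) → ℕ := fun n ω => if N ω ≤ (n : ℕ∞) then (N ω).toNat else n
    with hphidef
  have hphi_le : ∀ n ω, phi n ω ≤ n := by
    intro n ω
    by_cases h : N ω ≤ (n : ℕ∞)
    · simp only [hphidef, if_pos h]
      have hne : N ω ≠ ⊤ := ne_top_of_le_ne_top (ENat.coe_ne_top n) h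
      have hcoe : (((N ω).toNat : ℕ) : ℕ∞) = N ω := ENat.coe_toNat hne
      have : (((N ω).toNat : ℕ) : ℕ∞) ≤ (n : ℕ∞) := hcoe.le.trans h
      exact_mod_cast this
    · simp [hphidef, if_neg h]
  set g : ℕ → (ℕ → V) → ENNReal := fun n ω => ENNReal.ofReal (G.val W P (ω (phi n ω)))
    with hgdef
  have hg_agree : ∀ n (ω ω' : ℕ → V), (∀ i, i ≤ n → ω i = ω' i) → g n ω = g n ω' := by
    intro n ω ω' hag
    have hphi : phi n ω = phi n ω' := by
      by_cases h : N ω ≤ (n : ℕ∞)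
      · have h' : N ω' ≤ (n : ℕ∞) := (N_le_agree hN hag).1 h
        have heq : N ω = N ω' := N_eq_agree hN hag h
        simp only [hphidef, if_pos h, if_pos h', heq]
      · have h' : ¬ N ω' ≤ (n : ℕ∞) := fun hc => h ((N_le_agree hN hag).2 hc)
        simp only [hphidef, if_neg h, if_neg h']
    calc g n ω = ENNReal.ofReal (G.val W P (ω (phi n ω))) := rfl
      _ = ENNReal.ofReal (G.val W P (ω' (phi n ω'))) := by
          rw [hphi, hag _ (hphi_le n ω')]
      _ = g n ω' := rfl
  set extf : ∀ n : ℕ, (Fin (n+1) → V) → (ℕ → V) :=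
    fun n b i => if h : i < n + 1 then b ⟨i, h⟩ else b ⟨0, Nat.succ_pos n⟩ with hextdef
  have hext_agree : ∀ (n : ℕ) (ω : ℕ → V), ∀ i, i ≤ n →
      extf n (fun j : Fin (n+1) => ω j) i = ω i := by
    intro n ω i hi
    simp only [hextdef]
    rw [dif_pos (Nat.lt_succ_of_le hi)]
  set C : ∀ n : ℕ, (Fin (n+1) → V) → Set (ℕ → V) := fun n b => cyl (List.ofFn b) with hCdef
  have hCmeas : ∀ (n : ℕ) (b : Fin (n+1) → V), MeasurableSet (C n b) :=
    fun n b => measurableSet_cyl _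
  have hmemC : ∀ (n : ℕ) (b : Fin (n+1) → V) (ω : ℕ → V),
      ω ∈ C n b ↔ ∀ i : Fin (n+1), ω i = b i := fun n b ω => mem_cyl_ofFn b ω
  set Gf : ∀ n : ℕ, (Fin (n+1) → V) → ENNReal := fun n b => g n (extf n b) with hGfdef
  have hg_eq : ∀ n ω, g n ω = Gf n (fun i : Fin (n+1) => ω i) := by
    intro n ω
    exact hg_agree n ω (extf n (fun i : Fin (n+1) => ω i))
      (fun i hi => (hext_agree n ω i hi).symm)
  have hg_sum : ∀ (n : ℕ) (ω : ℕ → V),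
      g n ω = ∑ b : Fin (n+1) → V, (C n b).indicator (fun _ => Gf n b) ω := by
    intro n ω
    rw [Finset.sum_eq_single (fun i : Fin (n+1) => ω i)]
    · rw [Set.indicator_of_mem ((hmemC _ _ _).2 fun i => rfl)]
      exact hg_eq n ω
    · intro b _ hbne
      apply Set.indicator_of_notMem
      intro hmem
      apply hbne
      funext i
      exact ((hmemC _ _ _).1 hmem i).symm
    · intro hmem; exact absurd (Finset.mem_univ _) hmem
  have hgmeas : ∀ n, Measurable (g n) := by
    intro n
    have : g n = fun ω => ∑ b : Fin (n+1) → V, (C n b).indicator (fun _ => Gf n b) ω :=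
      funext (hg_sum n)
    rw [this]
    exact Finset.measurable_sum _ fun b _ => measurable_const.indicator (hCmeas n b)
  have hlint : ∀ n, ∫⁻ ω, g n ω ∂μ = ∑ b : Fin (n+1) → V, Gf n b * μ (C n b) := by
    intro n
    calc ∫⁻ ω, g n ω ∂μ
        = ∫⁻ ω, ∑ b : Fin (n+1) → V, (C n b).indicator (fun _ => Gf n b) ω ∂μ := by
          exact lintegral_congr (hg_sum n)
      _ = ∑ b : Fin (n+1) → V, ∫⁻ ω, (C n b).indicator (fun _ => Gf n b) ω ∂μ :=
          lintegral_finset_sum _ fun b _ => measurable_const.indicator (hCmeas n b)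
      _ = ∑ b : Fin (n+1) → V, Gf n b * μ (C n b) := by
          refine Finset.sum_congr rfl fun b _ => ?_
          exact lintegral_indicator_const (hCmeas n b) _
  -- base case
  have hbase : ∫⁻ ω, g 0 ω ∂μ = ENNReal.ofReal (G.val W P v₀) := by
    rw [hlint 0]
    have hGf0 : ∀ b : Fin 1 → V, Gf 0 b = ENNReal.ofReal (G.val W P (b 0)) := by
      intro b
      have hphi0 : phi 0 (extf 0 b) = 0 := by
        by_cases h : N (extf 0 b) ≤ ((0 : ℕ) : ℕ∞)
        · simp only [hphidef, if_pos h]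
          have h0 : N (extf 0 b) = 0 := le_antisymm (by exact_mod_cast h) zero_le
          rw [h0]; rfl
        · simp [hphidef, if_neg h]
      have hext0 : extf 0 b 0 = b 0 := by
        simp only [hextdef]
        rw [dif_pos (by omega : (0:ℕ) < 0 + 1)]
        exact congrArg b (Fin.ext rfl)
      simp only [hGfdef, hgdef, hphi0, hext0]
    have hC0 : ∀ b : Fin 1 → V, μ (C 0 b) = if b 0 = v₀ then 1 else 0 := by
      intro b
      have hCset : C 0 b = {ω : ℕ → V | ω 0 = b 0} := by
        ext ω
        rw [hmemC]
        constructor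
        · intro h; exact h 0
        · intro h i
          have hi0 : i = 0 := Fin.ext (by omega)
          rw [hi0]; exact h
      rw [hCset]
      by_cases hb : b 0 = v₀
      · rw [if_pos hb, hb]; exact hμ.2.1
      · rw [if_neg hb]
        refine measure_mono_null ?_
          ((prob_compl_eq_zero_iff (measurableSet_coord 0 v₀)).2 hμ.2.1)
        intro ω hω hω'
        exact hb (hω.symm.trans hω')
    calc ∑ b : Fin 1 → V, Gf 0 b * μ (C 0 b)
        = ∑ b : Fin 1 → V, (if b 0 = v₀ then ENNReal.ofReal (G.val W P v₀) else 0) := by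
          refine Finset.sum_congr rfl fun b _ => ?_
          rw [hGf0, hC0]
          by_cases hb : b 0 = v₀
          · rw [if_pos hb, if_pos hb, hb, mul_one]
          · rw [if_neg hb, if_neg hb, mul_zero]
      _ = ENNReal.ofReal (G.val W P v₀) := by
          rw [Finset.sum_eq_single (fun _ : Fin 1 => v₀)]
          · rw [if_pos rfl]
          · intro b _ hbne
            rw [if_neg]
            intro hb
            apply hbne; funext i
            have hi0 : i = 0 := Fin.ext (by omega)
            rw [hi0, hb]
          · intro hmm; exact absurd (Finset.mem_univ _) hmm
  -- one-step supermartingale inequality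
  have hstep : ∀ n, ∫⁻ ω, g (n+1) ω ∂μ ≤ ∫⁻ ω, g n ω ∂μ := by
    intro n
    rw [hlint n, hlint (n+1)]
    have hre : ∑ a : Fin (n+2) → V, Gf (n+1) a * μ (C (n+1) a)
        = ∑ p : (Fin (n+1) → V) × V,
            Gf (n+1) (Fin.snoc p.1 p.2) * μ (C (n+1) (Fin.snoc p.1 p.2)) :=
      (Fintype.sum_equiv
        (⟨fun p => Fin.snoc p.1 p.2, fun a => (Fin.init a, a (Fin.last (n+1))),
          fun p => by simp, fun a => by simp⟩ :
            ((Fin (n+1) → V) × V) ≃ (Fin (n+2) → V))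
        _ _ fun p => rfl).symm
    rw [hre, Fintype.sum_prod_type]
    refine Finset.sum_le_sum fun b _ => ?_
    have hCsnoc : ∀ x : V, C (n+1) (Fin.snoc b x) = C n b ∩ {ω : ℕ → V | ω (n+1) = x} := by
      intro x
      ext ω
      rw [hmemC]
      constructor
      · intro hall
        refine ⟨(hmemC _ _ _).2 fun i => ?_, ?_⟩
        · have := hall (Fin.castSucc i)
          rwa [Fin.snoc_castSucc, Fin.coe_castSucc] at this
        · have := hall (Fin.last (n+1))
          rwa [Fin.snoc_last, Fin.val_last] at this
      · rintro ⟨h1, h2⟩ i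
        induction i using Fin.lastCases with
        | last => rw [Fin.snoc_last, Fin.val_last]; exact h2
        | cast j =>
          rw [Fin.snoc_castSucc, Fin.coe_castSucc]
          exact (hmemC n b ω).1 h1 j
    have hmeas_split : μ (C n b) = ∑ x : V, μ (C (n+1) (Fin.snoc b x)) := by
      have hdisj : Pairwise (Function.onFun Disjoint fun x : V => C (n+1) (Fin.snoc b x)) := by
        intro x y hxy
        simp only [Function.onFun, Set.disjoint_left]
        intro ω hx hy
        rw [hCsnoc] at hx hy
        exact hxy (hx.2.symm.trans hy.2)
      have hunion : (⋃ x : V, C (n+1) (Fin.snoc b x)) = C n b := by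
        ext ω
        simp only [Set.mem_iUnion]
        constructor
        · rintro ⟨x, hx⟩; rw [hCsnoc] at hx; exact hx.1
        · intro hc; exact ⟨ω (n+1), by rw [hCsnoc]; exact ⟨hc, rfl⟩⟩
      rw [← hunion, measure_iUnion hdisj (fun x => hCmeas _ _), tsum_fintype]
    have hag : ∀ x : V, ∀ i, i ≤ n → extf (n+1) (Fin.snoc b x) i = extf n b i := by
      intro x i hi
      simp only [hextdef]
      rw [dif_pos (by omega : i < n + 1 + 1), dif_pos (Nat.lt_succ_of_le hi)]
      have hcast : (⟨i, by omega⟩ : Fin (n+2)) = Fin.castSucc ⟨i, Nat.lt_succ_of_le hi⟩ := rfl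
      rw [hcast, Fin.snoc_castSucc]
    by_cases hstop : N (extf n b) ≤ (n : ℕ∞)
    · have hGfeq : ∀ x : V, Gf (n+1) (Fin.snoc b x) = Gf n b := by
        intro x
        have hstop' : N (extf (n+1) (Fin.snoc b x)) ≤ (n : ℕ∞) :=
          (N_le_agree hN (hag x)).2 hstop
        have hNeq : N (extf (n+1) (Fin.snoc b x)) = N (extf n b) :=
          N_eq_agree hN (hag x) hstop'
        have h1 : phi (n+1) (extf (n+1) (Fin.snoc b x)) = (N (extf n b)).toNat := by
          simp only [hphidef]
          rw [if_pos (le_trans hstop' (by exact_mod_cast Nat.le_succ n)), hNeq]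
        have h2 : phi n (extf n b) = (N (extf n b)).toNat := by
          simp only [hphidef, if_pos hstop]
        have hk_le : (N (extf n b)).toNat ≤ n := by
          have hne : N (extf n b) ≠ ⊤ := ne_top_of_le_ne_top (ENat.coe_ne_top n) hstop
          have hcoe : (((N (extf n b)).toNat : ℕ) : ℕ∞) = N (extf n b) :=
            ENat.coe_toNat hne
          have : (((N (extf n b)).toNat : ℕ) : ℕ∞) ≤ (n : ℕ∞) := hcoe.le.trans hstop
          exact_mod_cast this
        show g (n+1) (extf (n+1) (Fin.snoc b x)) = g n (extf n b)
        simp only [hgdef, h1, h2]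
        rw [hag x _ hk_le]
      refine le_of_eq ?_
      calc ∑ x : V, Gf (n+1) (Fin.snoc b x) * μ (C (n+1) (Fin.snoc b x))
          = ∑ x : V, Gf n b * μ (C (n+1) (Fin.snoc b x)) := by
            refine Finset.sum_congr rfl fun x _ => by rw [hGfeq x]
        _ = Gf n b * μ (C n b) := by rw [← Finset.mul_sum, ← hmeas_split]
    · have hGf1 : ∀ x : V, Gf (n+1) (Fin.snoc b x) = ENNReal.ofReal (G.val W P x) := by
        intro x
        have hnot' : ¬ N (extf (n+1) (Fin.snoc b x)) ≤ (n : ℕ∞) :=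
          fun hc => hstop ((N_le_agree hN (hag x)).1 hc)
        have hphi1 : phi (n+1) (extf (n+1) (Fin.snoc b x)) = n + 1 := by
          by_cases hc : N (extf (n+1) (Fin.snoc b x)) ≤ ((n+1 : ℕ) : ℕ∞)
          · simp only [hphidef, if_pos hc]
            have hlt : (n : ℕ∞) < N (extf (n+1) (Fin.snoc b x)) := not_le.1 hnot'
            have hge : ((n+1 : ℕ) : ℕ∞) ≤ N (extf (n+1) (Fin.snoc b x)) := by
              have h1 : (n : ℕ∞) + 1 ≤ N (extf (n+1) (Fin.snoc b x)) :=
                Order.add_one_le_of_lt hlt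
              have h2 : ((n+1 : ℕ) : ℕ∞) = (n : ℕ∞) + 1 := by push_cast; ring
              rw [h2]; exact h1
            have hNeq : N (extf (n+1) (Fin.snoc b x)) = ((n+1 : ℕ) : ℕ∞) :=
              le_antisymm hc hge
            rw [hNeq]
            exact ENat.toNat_coe _
          · simp only [hphidef, if_neg hc]
        have hval : extf (n+1) (Fin.snoc b x) (n+1) = x := by
          simp only [hextdef]
          rw [dif_pos (by omega : n + 1 < n + 1 + 1)]
          have hlast : (⟨n+1, by omega⟩ : Fin (n+2)) = Fin.last (n+1) := rfl
          rw [hlast, Fin.snoc_last]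
        show ENNReal.ofReal (G.val W P (extf (n+1) (Fin.snoc b x)
          (phi (n+1) (extf (n+1) (Fin.snoc b x))))) = ENNReal.ofReal (G.val W P x)
        rw [hphi1, hval]
      have hGfn : Gf n b = ENNReal.ofReal (G.val W P (b (Fin.last n))) := by
        have hphin : phi n (extf n b) = n := by simp only [hphidef, if_neg hstop]
        have hvaln : extf n b n = b (Fin.last n) := by
          simp only [hextdef]
          rw [dif_pos (by omega : n < n + 1)]
          rfl
        show ENNReal.ofReal (G.val W P (extf n b (phi n (extf n b))))
          = ENNReal.ofReal (G.val W P (b (Fin.last n)))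
        rw [hphin, hvaln]
      rw [hGfn]
      by_cases hpos : μ (C n b) = 0
      · have hzero : ∀ x : V, μ (C (n+1) (Fin.snoc b x)) = 0 := by
          intro x
          refine measure_mono_null ?_ hpos
          rw [hCsnoc]; exact Set.inter_subset_left
        simp only [hzero, hpos, mul_zero, Finset.sum_const_zero]
        exact le_refl 0
      · set h := List.ofFn b with hhdef
        have hpos' : μ (cyl h) ≠ 0 := hpos
        have hlen : h.length = n + 1 := by simp [hhdef]
        have hne : h ≠ [] := by
          intro h0
          rw [h0] at hlen; simp at hlen
        have hlast : h.getLast? = some (b (Fin.last n)) := by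
          rw [hhdef, List.ofFn_succ', List.concat_eq_append, List.getLast?_concat]
        obtain ⟨hhead, hchain⟩ := hμ.pos_cyl hσ hτ h hpos' hne
        have hplay : G.FinitePlay h := ⟨hne, hchain⟩
        set u := b (Fin.last n) with hudef
        have hCsnoc' : ∀ x : V, C (n+1) (Fin.snoc b x) = cyl (h ++ [x]) := by
          intro x
          rw [hCsnoc, cyl_concat, hlen]
        rcases G.cover u with hM | hm | hR
        · have hE : G.E u (σ h) := hσ h hplay u hlast hM
          have hvv : G.val W P (σ h) = G.val W P u := (hCons u (σ h) hE (Or.inl hM)).symm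
          refine le_of_eq ?_
          calc ∑ x : V, Gf (n+1) (Fin.snoc b x) * μ (C (n+1) (Fin.snoc b x))
              = ∑ x : V, ENNReal.ofReal (G.val W P x) *
                  (if x = σ h then μ (cyl h) else 0) := by
                refine Finset.sum_congr rfl fun x _ => ?_
                rw [hGf1 x, hCsnoc' x, hμ.cyl_concat_max hlast hpos' hM x]
            _ = ENNReal.ofReal (G.val W P (σ h)) * μ (cyl h) := by
                rw [Finset.sum_eq_single (σ h)]
                · rw [if_pos rfl]
                · intro x _ hxne; rw [if_neg hxne, mul_zero]
                · intro hmm; exact absurd (Finset.mem_univ _) hmm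
            _ = ENNReal.ofReal (G.val W P u) * μ (C n b) := by rw [hvv]
        · have hE : G.E u (τ h) := hτ h hplay u hlast hm
          have hvv : G.val W P (τ h) = G.val W P u := (hCons u (τ h) hE (Or.inr hm)).symm
          refine le_of_eq ?_
          calc ∑ x : V, Gf (n+1) (Fin.snoc b x) * μ (C (n+1) (Fin.snoc b x))
              = ∑ x : V, ENNReal.ofReal (G.val W P x) *
                  (if x = τ h then μ (cyl h) else 0) := by
                refine Finset.sum_congr rfl fun x _ => ?_
                rw [hGf1 x, hCsnoc' x, hμ.cyl_concat_min hlast hpos' hm x]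
            _ = ENNReal.ofReal (G.val W P (τ h)) * μ (cyl h) := by
                rw [Finset.sum_eq_single (τ h)]
                · rw [if_pos rfl]
                · intro x _ hxne; rw [if_neg hxne, mul_zero]
                · intro hmm; exact absurd (Finset.mem_univ _) hmm
            _ = ENNReal.ofReal (G.val W P u) * μ (C n b) := by rw [hvv]
        · have hsum := G.vr_step hW hTail hP hR
          calc ∑ x : V, Gf (n+1) (Fin.snoc b x) * μ (C (n+1) (Fin.snoc b x))
              = ∑ x : V, ENNReal.ofReal (G.val W P x) *
                  (μ (cyl h) * ENNReal.ofReal (G.p u x)) := by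
                refine Finset.sum_congr rfl fun x _ => ?_
                rw [hGf1 x, hCsnoc' x, hμ.cyl_concat_rand hlast hpos' hR x]
            _ = μ (cyl h) * ∑ x : V, ENNReal.ofReal (G.p u x * G.val W P x) := by
                rw [Finset.mul_sum]
                refine Finset.sum_congr rfl fun x _ => ?_
                rw [ENNReal.ofReal_mul (G.p_nonneg u hR x)]
                ring
            _ = μ (cyl h) * ENNReal.ofReal (∑ x : V, G.p u x * G.val W P x) := by
                rw [ENNReal.ofReal_sum_of_nonneg fun x _ =>
                  mul_nonneg (G.p_nonneg u hR x) (Game.val_nonneg x)]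
            _ ≤ μ (cyl h) * ENNReal.ofReal (G.val W P u) :=
                mul_le_mul_right (ENNReal.ofReal_le_ofReal hsum) _
            _ = ENNReal.ofReal (G.val W P u) * μ (C n b) := mul_comm _ _
  -- all lintegrals bounded by the initial value
  have hbound : ∀ n, ∫⁻ ω, g n ω ∂μ ≤ ENNReal.ofReal (G.val W P v₀) := by
    intro n
    induction n with
    | zero => exact le_of_eq hbase
    | succ m ih => exact le_trans (hstep m) ih
  set f : (ℕ → V) → ℝ :=
    fun ω => if N ω < ⊤ then G.val W P (ω ((N ω).toNat)) else 0 with hfdef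
  have hf_nonneg : ∀ ω, 0 ≤ f ω := by
    intro ω
    by_cases hc : N ω < ⊤
    · simp only [hfdef, if_pos hc]; exact Game.val_nonneg _
    · simp only [hfdef, if_neg hc]
      exact le_refl 0
  have hf_liminf : ∀ ω, ENNReal.ofReal (f ω) ≤ Filter.liminf (fun n => g n ω) Filter.atTop := by
    intro ω
    by_cases hc : N ω < ⊤
    · have hnetop : N ω ≠ ⊤ := hc.ne
      have hcoe : (((N ω).toNat : ℕ) : ℕ∞) = N ω := ENat.coe_toNat hnetop
      have hev : ∀ n ≥ (N ω).toNat, g n ω = ENNReal.ofReal (f ω) := by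
        intro n hn
        have hle : N ω ≤ (n : ℕ∞) := by
          rw [← hcoe]; exact_mod_cast hn
        show ENNReal.ofReal (G.val W P (ω (phi n ω))) = ENNReal.ofReal (f ω)
        have hphival : phi n ω = (N ω).toNat := by simp only [hphidef, if_pos hle]
        rw [hphival]
        simp only [hfdef, if_pos hc]
      have hevq : (fun n => g n ω) =ᶠ[Filter.atTop] fun _ => ENNReal.ofReal (f ω) :=
        Filter.eventually_atTop.2 ⟨(N ω).toNat, hev⟩
      rw [Filter.liminf_congr hevq, Filter.liminf_const]
    · have hf0 : f ω = 0 := by simp only [hfdef, if_neg hc]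
      rw [hf0]
      simp
  have hlim : ∫⁻ ω, ENNReal.ofReal (f ω) ∂μ ≤ ENNReal.ofReal (G.val W P v₀) := by
    calc ∫⁻ ω, ENNReal.ofReal (f ω) ∂μ
        ≤ ∫⁻ ω, Filter.liminf (fun n => g n ω) Filter.atTop ∂μ :=
          lintegral_mono hf_liminf
      _ ≤ Filter.liminf (fun n => ∫⁻ ω, g n ω ∂μ) Filter.atTop := lintegral_liminf_le hgmeas
      _ ≤ Filter.liminf (fun _ : ℕ => ENNReal.ofReal (G.val W P v₀)) Filter.atTop :=
          Filter.liminf_le_liminf (Filter.Eventually.of_forall hbound)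
      _ = ENNReal.ofReal (G.val W P v₀) := Filter.liminf_const _
  show ∫ ω, f ω ∂μ ≤ G.val W P v₀
  by_cases hint : Integrable f μ
  · have hrepr := integral_eq_lintegral_of_nonneg_ae
      (Filter.Eventually.of_forall hf_nonneg) hint.aestronglyMeasurable
    calc ∫ ω, f ω ∂μ = (∫⁻ ω, ENNReal.ofReal (f ω) ∂μ).toReal := hrepr
      _ ≤ (ENNReal.ofReal (G.val W P v₀)).toReal :=
          ENNReal.toReal_mono ENNReal.ofReal_ne_top hlim
      _ = G.val W P v₀ := ENNReal.toReal_ofReal (Game.val_nonneg _)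
  · rw [integral_undef hint]
    exact Game.val_nonneg _

end StochasticGames
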